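/- Fix ȳ ∈ {0,1}^N. With P(ū | ȳ) = ∏_{i=0}^{N−1} P(u_i | u₀^{i−1}, ȳ) and Q(ū | ȳ) = ∏_{i=0}^{N−1} Q(u_i | u₀^{i−1}, ȳ), where Q(u_i | u₀^{i−1}, ȳ) = 1/2 for i ∈ F and equals P(u_i | u₀^{i−1}, ȳ) for i ∉ F, one has Σ_{ū∈{0,1}^N} |Q(ū | ȳ) − P(ū | ȳ)| ≤ 2 Σ_{i∈F} Σ_{u₀^{i−1}} (∏_{j=0}^{i−1} P(u_j | u₀^{j−1}, ȳ)) · |1/2 − P(0 | u₀^{i−1}, ȳ)|. -/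

import Mathlib

open Finset

noncomputable section

/-- The polarization kernel `G₂ = [[1,0],[1,1]]` over GF(2). -/
def G2 : Matrix (Fin 2) (Fin 2) (ZMod 2) := !![1, 0; 1, 1]

/-- Index identification `Fin 2 × Fin (2^n) ≃ Fin (2^(n+1))`. -/
def finPowEquiv (n : ℕ) : Fin 2 × Fin (2 ^ n) ≃ Fin (2 ^ (n + 1)) :=
  finProdFinEquiv.trans (finCongr (by rw [pow_succ]; ring))

/-- The `n`-fold Kronecker power `G₂^{⊗n}` over GF(2). -/
def kronPow : (n : ℕ) → Matrix (Fin (2 ^ n)) (Fin (2 ^ n)) (ZMod 2)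
  | 0 => 1
  | n + 1 => Matrix.reindex (finPowEquiv n) (finPowEquiv n)
      (Matrix.kroneckerMap (· * ·) G2 (kronPow n))

/-- Reversal of the `n`-bit binary expansion of `i`. -/
def bitRevNat (n i : ℕ) : ℕ :=
  ∑ k ∈ Finset.range n, if Nat.testBit i (n - 1 - k) then 2 ^ k else 0

lemma sum_range_two_pow_lt (n : ℕ) : ∑ k ∈ Finset.range n, 2 ^ k < 2 ^ n := by
  induction n with
  | zero => simp
  | succ m ih => rw [Finset.sum_range_succ, pow_succ]; omega

lemma bitRevNat_lt (n i : ℕ) : bitRevNat n i < 2 ^ n := by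
  have h1 : bitRevNat n i ≤ ∑ k ∈ Finset.range n, 2 ^ k :=
    Finset.sum_le_sum (fun k _ => by split <;> simp)
  have h2 := sum_range_two_pow_lt n
  omega

/-- The bit-reversal permutation matrix `Aₙ`. -/
def bitRevMatrix (n : ℕ) : Matrix (Fin (2 ^ n)) (Fin (2 ^ n)) (ZMod 2) :=
  fun i j => if (j : ℕ) = bitRevNat n (i : ℕ) then 1 else 0

/-- The polar transform matrix `Hₙ = Aₙ G₂^{⊗n}`. -/
def polarH (n : ℕ) : Matrix (Fin (2 ^ n)) (Fin (2 ^ n)) (ZMod 2) :=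
  bitRevMatrix n * kronPow n

/-- BSC(D) transition probability `W(y∣x)`. -/
def bsc (D : ℝ) (y x : ZMod 2) : ℝ := if y = x then 1 - D else D

/-- The polar transform `x̄ = ū Hₙ` of a word `ū`. -/
def polarEnc (n : ℕ) (u : Fin (2 ^ n) → ZMod 2) : Fin (2 ^ n) → ZMod 2 :=
  Matrix.vecMul u (polarH n)

/-- `W^{(i)}(ȳ, u₀^{i−1} ∣ u_i)`; it depends on `u` only through coordinates `≤ i`,
the coordinates `> i` being summed out. -/
def Wi (D : ℝ) (n : ℕ) (y : Fin (2 ^ n) → ZMod 2) (i : Fin (2 ^ n))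
    (u : Fin (2 ^ n) → ZMod 2) : ℝ :=
  ((2 : ℝ) ^ (2 ^ n - 1))⁻¹ *
    ∑ v ∈ Finset.univ.filter (fun v : Fin (2 ^ n) → ZMod 2 => ∀ j, j ≤ i → v j = u j),
      ∏ j, bsc D (y j) (polarEnc n v j)

/-- The posterior `P(u_i ∣ u₀^{i−1}, ȳ)`. -/
def post (D : ℝ) (n : ℕ) (y : Fin (2 ^ n) → ZMod 2) (i : Fin (2 ^ n))
    (u : Fin (2 ^ n) → ZMod 2) : ℝ :=
  Wi D n y i u /
    (Wi D n y i (Function.update u i 0) + Wi D n y i (Function.update u i 1))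


section Aux
variable {N : ℕ}


/-- Telescoping inequality for products of numbers in `[0,1]`. -/
lemma abs_prod_sub_prod_le' (P Q : Fin N → ℝ) (s : Finset (Fin N))
    (hP : ∀ i ∈ s, 0 ≤ P i) (hQ0 : ∀ i ∈ s, 0 ≤ Q i) (hQ1 : ∀ i ∈ s, Q i ≤ 1) :
    |(∏ i ∈ s, Q i) - ∏ i ∈ s, P i| ≤
      ∑ i ∈ s, (∏ j ∈ s.filter (· < i), P j) * |Q i - P i| *
        ∏ j ∈ s.filter (i < ·), Q j := by
  induction s using Finset.induction_on_max with
  | empty => simp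
  | insert a s ha ih =>
    have has : a ∉ s := fun h => lt_irrefl a (ha a h)
    have hPs : 0 ≤ ∏ j ∈ s, P j :=
      Finset.prod_nonneg fun j hj => hP j (Finset.mem_insert_of_mem hj)
    have hQa0 : 0 ≤ Q a := hQ0 a (Finset.mem_insert_self a s)
    rw [Finset.prod_insert has, Finset.prod_insert has, Finset.sum_insert has]
    have key : Q a * ∏ i ∈ s, Q i - P a * ∏ i ∈ s, P i
        = (Q a - P a) * ∏ i ∈ s, P i + Q a * ((∏ i ∈ s, Q i) - ∏ i ∈ s, P i) := by ring
    have step1 : |Q a * ∏ i ∈ s, Q i - P a * ∏ i ∈ s, P i|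
        ≤ |Q a - P a| * ∏ i ∈ s, P i + Q a * |(∏ i ∈ s, Q i) - ∏ i ∈ s, P i| := by
      rw [key]
      calc _ ≤ |(Q a - P a) * ∏ i ∈ s, P i| + |Q a * ((∏ i ∈ s, Q i) - ∏ i ∈ s, P i)| :=
            abs_add_le _ _
        _ = _ := by rw [abs_mul, abs_mul, abs_of_nonneg hPs, abs_of_nonneg hQa0]
    refine step1.trans ?_
    have ih' := ih (fun i hi => hP i (Finset.mem_insert_of_mem hi))
      (fun i hi => hQ0 i (Finset.mem_insert_of_mem hi))
      (fun i hi => hQ1 i (Finset.mem_insert_of_mem hi))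
    have step2 : Q a * |(∏ i ∈ s, Q i) - ∏ i ∈ s, P i|
        ≤ Q a * ∑ i ∈ s, (∏ j ∈ s.filter (· < i), P j) * |Q i - P i| *
            ∏ j ∈ s.filter (i < ·), Q j := mul_le_mul_of_nonneg_left ih' hQa0
    have hfa1 : (insert a s).filter (· < a) = s := by
      rw [Finset.filter_insert, if_neg (lt_irrefl a)]
      exact Finset.filter_true_of_mem ha
    have hfa2 : (insert a s).filter (a < ·) = ∅ := by
      rw [Finset.filter_insert, if_neg (lt_irrefl a)]
      exact Finset.filter_false_of_mem fun x hx => not_lt.2 (ha x hx).le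
    have hterm : ∀ i ∈ s,
        (∏ j ∈ (insert a s).filter (· < i), P j) * |Q i - P i| *
            ∏ j ∈ (insert a s).filter (i < ·), Q j
        = Q a * ((∏ j ∈ s.filter (· < i), P j) * |Q i - P i| *
            ∏ j ∈ s.filter (i < ·), Q j) := by
      intro i hi
      have h1 : (insert a s).filter (· < i) = s.filter (· < i) := by
        rw [Finset.filter_insert, if_neg (not_lt.2 (ha i hi).le)]
      have h2 : (insert a s).filter (i < ·) = insert a (s.filter (i < ·)) := by
        rw [Finset.filter_insert, if_pos (ha i hi)]
      have h3 : a ∉ s.filter (i < ·) := fun h => has (Finset.mem_of_mem_filter _ h)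
      rw [h1, h2, Finset.prod_insert h3]
      ring
    rw [hfa1, hfa2, Finset.prod_empty, Finset.sum_congr rfl hterm, ← Finset.mul_sum]
    have : (∏ j ∈ s, P j) * |Q a - P a| * 1 = |Q a - P a| * ∏ j ∈ s, P j := by ring
    rw [this]
    exact add_le_add_right step2 _



lemma kernel_sum_one (Q : Fin N → (Fin N → ZMod 2) → ℝ)
    (hdep : ∀ (i : Fin N) (u v : Fin N → ZMod 2), (∀ j, j ≤ i → u j = v j) → Q i u = Q i v)
    (hsum : ∀ (i : Fin N) (u : Fin N → ZMod 2),
      Q i (Function.update u i 0) + Q i (Function.update u i 1) = 1)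
    (s : Finset (Fin N)) :
    (∀ j ∈ s, ∀ k, j ≤ k → k ∈ s) → ∀ w : Fin N → ZMod 2,
    ∑ u ∈ Finset.univ.filter (fun u : Fin N → ZMod 2 => ∀ j, j ∉ s → u j = w j),
      ∏ j ∈ s, Q j u = 1 := by
  induction s using Finset.induction_on_min with
  | empty =>
    intro _ w
    have hset : Finset.univ.filter
        (fun u : Fin N → ZMod 2 => ∀ j, j ∉ (∅ : Finset (Fin N)) → u j = w j) = {w} := by
      ext u
      simp [funext_iff]
    rw [hset]; simp
  | insert a s ha ih =>
    intro hup w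
    have has : a ∉ s := fun h => lt_irrefl a (ha a h)
    have hupt : ∀ j ∈ s, ∀ k, j ≤ k → k ∈ s := by
      intro j hj k hk
      rcases Finset.mem_insert.1 (hup j (Finset.mem_insert_of_mem hj) k hk) with h | h
      · exact absurd (h ▸ hk) (not_le.2 (ha j hj))
      · exact h
    rw [← Finset.sum_fiberwise_of_maps_to (t := (Finset.univ : Finset (ZMod 2)))
      (g := fun u : Fin N → ZMod 2 => u a) (fun _ _ => Finset.mem_univ _)]
    have fib : ∀ b : ZMod 2,
        (Finset.univ.filter
          (fun u : Fin N → ZMod 2 => ∀ j, j ∉ insert a s → u j = w j)).filter (fun u => u a = b)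
        = Finset.univ.filter
          (fun u : Fin N → ZMod 2 => ∀ j, j ∉ s → u j = Function.update w a b j) := by
      intro b; ext u
      simp only [Finset.mem_filter, Finset.mem_univ, true_and]
      constructor
      · rintro ⟨h1, h2⟩ j hj
        by_cases hja : j = a
        · subst hja; rw [Function.update_self, h2]
        · rw [Function.update_of_ne hja]
          exact h1 j (by simp [hja, hj])
      · intro h
        refine ⟨fun j hj => ?_, ?_⟩
        · have hjs : j ∉ s := fun hh => hj (Finset.mem_insert_of_mem hh)
          have hja : j ≠ a := fun hh => hj (hh ▸ Finset.mem_insert_self a s)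
          have := h j hjs
          rwa [Function.update_of_ne hja] at this
        · have := h a has
          rwa [Function.update_self] at this
    have fibval : ∀ b : ZMod 2,
        ∑ u ∈ (Finset.univ.filter
          (fun u : Fin N → ZMod 2 => ∀ j, j ∉ insert a s → u j = w j)).filter (fun u => u a = b),
          ∏ j ∈ insert a s, Q j u = Q a (Function.update w a b) := by
      intro b
      rw [fib b]
      have hcong : ∀ u ∈ Finset.univ.filter
          (fun u : Fin N → ZMod 2 => ∀ j, j ∉ s → u j = Function.update w a b j),
          ∏ j ∈ insert a s, Q j u = Q a (Function.update w a b) * ∏ j ∈ s, Q j u := by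
        intro u hu
        have hu' := (Finset.mem_filter.1 hu).2
        rw [Finset.prod_insert has]
        congr 1
        refine hdep a u (Function.update w a b) (fun j hj => ?_)
        have hjs : j ∉ s := fun hh => absurd hj (not_le.2 (ha j hh))
        exact hu' j hjs
      rw [Finset.sum_congr rfl hcong, ← Finset.mul_sum, ih hupt (Function.update w a b),
        mul_one]
    have huniv : (Finset.univ : Finset (ZMod 2)) = {0, 1} := by decide
    rw [huniv, Finset.sum_insert (by decide), Finset.sum_singleton, fibval 0, fibval 1,
      hsum a w]

/-- Summing out the coordinates `> i` against the kernel `Q`. -/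
lemma sum_cond (Q : Fin N → (Fin N → ZMod 2) → ℝ)
    (hdep : ∀ (i : Fin N) (u v : Fin N → ZMod 2), (∀ j, j ≤ i → u j = v j) → Q i u = Q i v)
    (hsum : ∀ (i : Fin N) (u : Fin N → ZMod 2),
      Q i (Function.update u i 0) + Q i (Function.update u i 1) = 1)
    (i : Fin N) (A : (Fin N → ZMod 2) → ℝ)
    (hA : ∀ u v : Fin N → ZMod 2, (∀ j, j ≤ i → u j = v j) → A u = A v) :
    ∑ u : Fin N → ZMod 2, A u * ∏ j ∈ Finset.univ.filter (i < ·), Q j u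
      = ∑ w ∈ Finset.univ.filter (fun w : Fin N → ZMod 2 => ∀ j, i < j → w j = 0), A w := by
  classical
  have hmaps : ∀ u : Fin N → ZMod 2, (fun j => if j ≤ i then u j else 0)
      ∈ Finset.univ.filter (fun w : Fin N → ZMod 2 => ∀ j, i < j → w j = 0) := by
    intro u
    refine Finset.mem_filter.2 ⟨Finset.mem_univ _, fun j hj => ?_⟩
    simp [not_le.2 hj]
  rw [← Finset.sum_fiberwise_of_maps_to
    (g := fun (u : Fin N → ZMod 2) (j : Fin N) => if j ≤ i then u j else 0) (fun u _ => hmaps u)]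
  refine Finset.sum_congr rfl fun w hw => ?_
  have hw' : ∀ j, i < j → w j = 0 := (Finset.mem_filter.1 hw).2
  have fib : Finset.univ.filter
        (fun u : Fin N → ZMod 2 => (fun j => if j ≤ i then u j else 0) = w)
      = Finset.univ.filter
        (fun u : Fin N → ZMod 2 => ∀ j, j ∉ Finset.univ.filter (i < ·) → u j = w j) := by
    ext u
    simp only [Finset.mem_filter, Finset.mem_univ, true_and, funext_iff, not_lt]
    constructor
    · intro h j hj
      have := h j
      rwa [if_pos hj] at this
    · intro h j
      by_cases hj : j ≤ i
      · rw [if_pos hj]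
        exact h j hj
      · rw [if_neg hj, (hw' j (not_le.1 hj))]
  rw [fib]
  have hAu : ∀ u ∈ Finset.univ.filter
      (fun u : Fin N → ZMod 2 => ∀ j, j ∉ Finset.univ.filter (i < ·) → u j = w j),
      A u * ∏ j ∈ Finset.univ.filter (i < ·), Q j u
        = A w * ∏ j ∈ Finset.univ.filter (i < ·), Q j u := by
    intro u hu
    have hu' := (Finset.mem_filter.1 hu).2
    congr 1
    refine hA u w (fun j hj => hu' j ?_)
    simpa using hj
  rw [Finset.sum_congr rfl hAu, ← Finset.mul_sum]
  rw [kernel_sum_one Q hdep hsum _ (fun j hj k hk =>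
    Finset.mem_filter.2 ⟨Finset.mem_univ _, lt_of_lt_of_le (Finset.mem_filter.1 hj).2 hk⟩) w,
    mul_one]

/-- Split the coordinate `i` itself, using the flip symmetry of `A` at `i`. -/
lemma sum_split (i : Fin N) (A : (Fin N → ZMod 2) → ℝ)
    (hflip : ∀ w : Fin N → ZMod 2, A (Function.update w i 1) = A (Function.update w i 0)) :
    ∑ w ∈ Finset.univ.filter (fun w : Fin N → ZMod 2 => ∀ j, i < j → w j = 0), A w
      = 2 * ∑ w ∈ Finset.univ.filter (fun w : Fin N → ZMod 2 => ∀ j, i ≤ j → w j = 0), A w := by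
  classical
  have hmaps : ∀ w ∈ Finset.univ.filter (fun w : Fin N → ZMod 2 => ∀ j, i < j → w j = 0),
      Function.update w i 0 ∈
        Finset.univ.filter (fun w : Fin N → ZMod 2 => ∀ j, i ≤ j → w j = 0) := by
    intro w hw
    have hw' := (Finset.mem_filter.1 hw).2
    refine Finset.mem_filter.2 ⟨Finset.mem_univ _, fun j hj => ?_⟩
    rcases eq_or_lt_of_le hj with h | h
    · rw [← h, Function.update_self]
    · rw [Function.update_of_ne (ne_of_gt h), hw' j h]
  rw [← Finset.sum_fiberwise_of_maps_to
    (g := fun w : Fin N → ZMod 2 => Function.update w i 0) hmaps, Finset.mul_sum]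
  refine Finset.sum_congr rfl fun w hw => ?_
  have hw' := (Finset.mem_filter.1 hw).2
  have hwi : w i = 0 := hw' i le_rfl
  have hwup : Function.update w i 0 = w := by rw [← hwi, Function.update_eq_self]
  have fib : (Finset.univ.filter
        (fun u : Fin N → ZMod 2 => ∀ j, i < j → u j = 0)).filter
        (fun u => Function.update u i 0 = w)
      = {w, Function.update w i 1} := by
    ext u
    simp only [Finset.mem_filter, Finset.mem_univ, true_and, Finset.mem_insert,
      Finset.mem_singleton]
    constructor
    · rintro ⟨h1, h2⟩
      have hu : u = Function.update w i (u i) := by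
        funext j
        by_cases hj : j = i
        · subst hj; rw [Function.update_self]
        · rw [Function.update_of_ne hj, ← h2, Function.update_of_ne hj]
      rcases (show u i = 0 ∨ u i = 1 from by
        have : ∀ c : ZMod 2, c = 0 ∨ c = 1 := by decide
        exact this (u i)) with h | h
      · left; rw [hu, h, ← hwi, Function.update_eq_self]
      · right; rw [hu, h]
    · rintro (rfl | rfl)
      · exact ⟨fun j hj => hw' j hj.le, hwup⟩
      · constructor
        · intro j hj
          rw [Function.update_of_ne (ne_of_gt hj)]
          exact hw' j hj.le
        · rw [Function.update_idem, hwup]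
  rw [fib]
  have hne : w ≠ Function.update w i 1 := by
    intro h
    have := congrFun h i
    rw [Function.update_self, hwi] at this
    exact absurd this (by decide)
  rw [Finset.sum_pair hne, hflip w, hwup, two_mul]


end Aux

section PostLemmas

variable {D : ℝ} {n : ℕ}

lemma zmod2_cases (c : ZMod 2) : c = 0 ∨ c = 1 := by revert c; decide

lemma Wi_pos (hD0 : 0 < D) (hD1 : D < 1) (y : Fin (2 ^ n) → ZMod 2) (i : Fin (2 ^ n))
    (u : Fin (2 ^ n) → ZMod 2) : 0 < Wi D n y i u := by
  unfold Wi
  apply mul_pos (inv_pos.2 (by positivity))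
  apply Finset.sum_pos
  · intro v _
    refine Finset.prod_pos fun j _ => ?_
    unfold bsc; split <;> linarith
  · exact ⟨u, Finset.mem_filter.2 ⟨Finset.mem_univ _, fun j _ => rfl⟩⟩

lemma Wi_congr (y : Fin (2 ^ n) → ZMod 2) (i : Fin (2 ^ n)) {u v : Fin (2 ^ n) → ZMod 2}
    (h : ∀ j, j ≤ i → u j = v j) : Wi D n y i u = Wi D n y i v := by
  unfold Wi
  congr 1
  refine Finset.sum_congr ?_ fun _ _ => rfl
  ext w
  simp only [Finset.mem_filter, Finset.mem_univ, true_and]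
  exact ⟨fun hw j hj => (hw j hj).trans (h j hj), fun hw j hj => (hw j hj).trans (h j hj).symm⟩

lemma update_agree {ι : Type*} [DecidableEq ι] [Preorder ι] {u v : ι → ZMod 2} {i : ι}
    (h : ∀ j, j ≤ i → u j = v j) (b : ZMod 2) :
    ∀ j, j ≤ i → Function.update u i b j = Function.update v i b j := by
  intro j hj
  by_cases hji : j = i
  · subst hji; simp
  · rw [Function.update_of_ne hji, Function.update_of_ne hji]; exact h j hj

lemma post_update (y : Fin (2 ^ n) → ZMod 2) (i : Fin (2 ^ n)) (u : Fin (2 ^ n) → ZMod 2)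
    (b : ZMod 2) :
    post D n y i (Function.update u i b)
      = Wi D n y i (Function.update u i b) /
        (Wi D n y i (Function.update u i 0) + Wi D n y i (Function.update u i 1)) := by
  unfold post
  rw [Function.update_idem, Function.update_idem]

lemma post_sum (hD0 : 0 < D) (hD1 : D < 1) (y : Fin (2 ^ n) → ZMod 2) (i : Fin (2 ^ n))
    (u : Fin (2 ^ n) → ZMod 2) :
    post D n y i (Function.update u i 0) + post D n y i (Function.update u i 1) = 1 := by
  rw [post_update, post_update, ← add_div, div_self]
  exact (add_pos (Wi_pos hD0 hD1 y i _) (Wi_pos hD0 hD1 y i _)).ne'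

lemma post_nonneg (hD0 : 0 < D) (hD1 : D < 1) (y : Fin (2 ^ n) → ZMod 2) (i : Fin (2 ^ n))
    (u : Fin (2 ^ n) → ZMod 2) : 0 ≤ post D n y i u :=
  div_nonneg (Wi_pos hD0 hD1 y i u).le
    (add_pos (Wi_pos hD0 hD1 y i _) (Wi_pos hD0 hD1 y i _)).le

lemma post_le_one (hD0 : 0 < D) (hD1 : D < 1) (y : Fin (2 ^ n) → ZMod 2) (i : Fin (2 ^ n))
    (u : Fin (2 ^ n) → ZMod 2) : post D n y i u ≤ 1 := by
  unfold post
  rw [div_le_one (add_pos (Wi_pos hD0 hD1 y i _) (Wi_pos hD0 hD1 y i _))]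
  rcases zmod2_cases (u i) with h | h
  · have hu : Function.update u i 0 = u := by rw [← h, Function.update_eq_self]
    rw [hu]
    exact le_add_of_nonneg_right (Wi_pos hD0 hD1 y i _).le
  · have hu : Function.update u i 1 = u := by rw [← h, Function.update_eq_self]
    rw [hu]
    exact le_add_of_nonneg_left (Wi_pos hD0 hD1 y i _).le

lemma post_congr (y : Fin (2 ^ n) → ZMod 2) (i : Fin (2 ^ n)) {u v : Fin (2 ^ n) → ZMod 2}
    (h : ∀ j, j ≤ i → u j = v j) : post D n y i u = post D n y i v := by
  unfold post
  rw [Wi_congr y i h, Wi_congr y i (update_agree h 0), Wi_congr y i (update_agree h 1)]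

lemma post_flip (hD0 : 0 < D) (hD1 : D < 1) (y : Fin (2 ^ n) → ZMod 2) (i : Fin (2 ^ n))
    (u : Fin (2 ^ n) → ZMod 2) :
    post D n y i (Function.update u i 1) = 1 - post D n y i (Function.update u i 0) := by
  have := post_sum hD0 hD1 y i u
  linarith


end PostLemmas

/-- **Total variation bound for a fixed source word `ȳ`**: the distance between
`Q(·∣ȳ)` and `P(·∣ȳ)` is controlled by the biases of the frozen positions.  Pasts
`u₀^{i−1}` are represented by the words `u` whose coordinates `≥ i` vanish. -/
theorem total_variation_bound_fixed_y (D : ℝ) (hD0 : 0 < D) (hD1 : D < 1)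
    (n : ℕ) (F : Finset (Fin (2 ^ n))) (y : Fin (2 ^ n) → ZMod 2) :
    ∑ u : Fin (2 ^ n) → ZMod 2,
        |(∏ i, (if i ∈ F then (1 / 2 : ℝ) else post D n y i u)) - ∏ i, post D n y i u|
      ≤ 2 * ∑ i ∈ F,
          ∑ u ∈ Finset.univ.filter (fun u : Fin (2 ^ n) → ZMod 2 => ∀ j, i ≤ j → u j = 0),
            (∏ j ∈ Finset.univ.filter (fun j => j < i), post D n y j u) *
              |1 / 2 - post D n y i u| := by
  have hQdep : ∀ (i : Fin (2 ^ n)) (u v : Fin (2 ^ n) → ZMod 2),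
      (∀ j, j ≤ i → u j = v j) →
      (if i ∈ F then (1 / 2 : ℝ) else post D n y i u)
        = (if i ∈ F then (1 / 2 : ℝ) else post D n y i v) := by
    intro i u v h
    split
    · rfl
    · exact post_congr y i h
  have hQsum : ∀ (i : Fin (2 ^ n)) (u : Fin (2 ^ n) → ZMod 2),
      (if i ∈ F then (1 / 2 : ℝ) else post D n y i (Function.update u i 0))
        + (if i ∈ F then (1 / 2 : ℝ) else post D n y i (Function.update u i 1)) = 1 := by
    intro i u
    split
    · norm_num
    · exact post_sum hD0 hD1 y i u
  have hQ0 : ∀ (i : Fin (2 ^ n)) (u : Fin (2 ^ n) → ZMod 2),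
      0 ≤ (if i ∈ F then (1 / 2 : ℝ) else post D n y i u) := by
    intro i u; split
    · norm_num
    · exact post_nonneg hD0 hD1 y i u
  have hQ1 : ∀ (i : Fin (2 ^ n)) (u : Fin (2 ^ n) → ZMod 2),
      (if i ∈ F then (1 / 2 : ℝ) else post D n y i u) ≤ 1 := by
    intro i u; split
    · norm_num
    · exact post_le_one hD0 hD1 y i u
  have step1 : ∀ u : Fin (2 ^ n) → ZMod 2,
      |(∏ i, (if i ∈ F then (1 / 2 : ℝ) else post D n y i u)) - ∏ i, post D n y i u| ≤
        ∑ i, (∏ j ∈ Finset.univ.filter (· < i), post D n y j u) *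
          |(if i ∈ F then (1 / 2 : ℝ) else post D n y i u) - post D n y i u| *
          ∏ j ∈ Finset.univ.filter (i < ·),
            (if j ∈ F then (1 / 2 : ℝ) else post D n y j u) := fun u =>
    abs_prod_sub_prod_le' (fun i => post D n y i u)
      (fun i => if i ∈ F then (1 / 2 : ℝ) else post D n y i u) Finset.univ
      (fun i _ => post_nonneg hD0 hD1 y i u) (fun i _ => hQ0 i u) (fun i _ => hQ1 i u)
  have hstepi : ∀ i ∈ F,
      (∑ u : Fin (2 ^ n) → ZMod 2,
        (∏ j ∈ Finset.univ.filter (· < i), post D n y j u) *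
          |(if i ∈ F then (1 / 2 : ℝ) else post D n y i u) - post D n y i u| *
          ∏ j ∈ Finset.univ.filter (i < ·),
            (if j ∈ F then (1 / 2 : ℝ) else post D n y j u))
      = 2 * ∑ w ∈ Finset.univ.filter
            (fun w : Fin (2 ^ n) → ZMod 2 => ∀ j, i ≤ j → w j = 0),
          (∏ j ∈ Finset.univ.filter (· < i), post D n y j w) *
            |1 / 2 - post D n y i w| := by
    intro i hi
    have hA : ∀ u v : Fin (2 ^ n) → ZMod 2, (∀ j, j ≤ i → u j = v j) →
        (∏ j ∈ Finset.univ.filter (· < i), post D n y j u) * |1 / 2 - post D n y i u|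
          = (∏ j ∈ Finset.univ.filter (· < i), post D n y j v) *
              |1 / 2 - post D n y i v| := by
      intro u v h
      congr 1
      · refine Finset.prod_congr rfl fun j hj => ?_
        exact post_congr y j fun k hk =>
          h k (hk.trans (le_of_lt (Finset.mem_filter.1 hj).2))
      · rw [post_congr y i h]
    have hflip : ∀ w : Fin (2 ^ n) → ZMod 2,
        (∏ j ∈ Finset.univ.filter (· < i), post D n y j (Function.update w i 1)) *
            |1 / 2 - post D n y i (Function.update w i 1)|
          = (∏ j ∈ Finset.univ.filter (· < i), post D n y j (Function.update w i 0)) *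
              |1 / 2 - post D n y i (Function.update w i 0)| := by
      intro w
      congr 1
      · refine Finset.prod_congr rfl fun j hj => ?_
        refine post_congr y j fun k hk => ?_
        have hki : k ≠ i := ne_of_lt (lt_of_le_of_lt hk (Finset.mem_filter.1 hj).2)
        rw [Function.update_of_ne hki, Function.update_of_ne hki]
      · rw [post_flip hD0 hD1 y i w]
        have : (1 : ℝ) / 2 - (1 - post D n y i (Function.update w i 0))
            = -(1 / 2 - post D n y i (Function.update w i 0)) := by ring
        rw [this, abs_neg]
    have e1 : ∀ u : Fin (2 ^ n) → ZMod 2,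
        (∏ j ∈ Finset.univ.filter (· < i), post D n y j u) *
            |(if i ∈ F then (1 / 2 : ℝ) else post D n y i u) - post D n y i u| *
            ∏ j ∈ Finset.univ.filter (i < ·),
              (if j ∈ F then (1 / 2 : ℝ) else post D n y j u)
          = ((∏ j ∈ Finset.univ.filter (· < i), post D n y j u) *
              |1 / 2 - post D n y i u|) *
            ∏ j ∈ Finset.univ.filter (i < ·),
              (if j ∈ F then (1 / 2 : ℝ) else post D n y j u) := by
      intro u
      rw [if_pos hi]
    calc
      (∑ u : Fin (2 ^ n) → ZMod 2,
          (∏ j ∈ Finset.univ.filter (· < i), post D n y j u) *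
            |(if i ∈ F then (1 / 2 : ℝ) else post D n y i u) - post D n y i u| *
            ∏ j ∈ Finset.univ.filter (i < ·),
              (if j ∈ F then (1 / 2 : ℝ) else post D n y j u))
        = ∑ u : Fin (2 ^ n) → ZMod 2,
            ((∏ j ∈ Finset.univ.filter (· < i), post D n y j u) *
                |1 / 2 - post D n y i u|) *
              ∏ j ∈ Finset.univ.filter (i < ·),
                (if j ∈ F then (1 / 2 : ℝ) else post D n y j u) :=
          Finset.sum_congr rfl fun u _ => e1 u
      _ = ∑ w ∈ Finset.univ.filter
            (fun w : Fin (2 ^ n) → ZMod 2 => ∀ j, i < j → w j = 0),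
            (∏ j ∈ Finset.univ.filter (· < i), post D n y j w) *
              |1 / 2 - post D n y i w| :=
          sum_cond (fun j u => if j ∈ F then (1 / 2 : ℝ) else post D n y j u)
            hQdep hQsum i
            (fun u => (∏ j ∈ Finset.univ.filter (· < i), post D n y j u) *
              |1 / 2 - post D n y i u|) hA
      _ = 2 * ∑ w ∈ Finset.univ.filter
            (fun w : Fin (2 ^ n) → ZMod 2 => ∀ j, i ≤ j → w j = 0),
            (∏ j ∈ Finset.univ.filter (· < i), post D n y j w) *
              |1 / 2 - post D n y i w| :=
          sum_split i (fun u => (∏ j ∈ Finset.univ.filter (· < i), post D n y j u) *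
            |1 / 2 - post D n y i u|) hflip
  calc
    ∑ u : Fin (2 ^ n) → ZMod 2,
        |(∏ i, (if i ∈ F then (1 / 2 : ℝ) else post D n y i u)) - ∏ i, post D n y i u|
      ≤ ∑ u : Fin (2 ^ n) → ZMod 2, ∑ i,
          (∏ j ∈ Finset.univ.filter (· < i), post D n y j u) *
            |(if i ∈ F then (1 / 2 : ℝ) else post D n y i u) - post D n y i u| *
            ∏ j ∈ Finset.univ.filter (i < ·),
              (if j ∈ F then (1 / 2 : ℝ) else post D n y j u) :=
        Finset.sum_le_sum fun u _ => step1 u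
    _ = ∑ i, ∑ u : Fin (2 ^ n) → ZMod 2,
          (∏ j ∈ Finset.univ.filter (· < i), post D n y j u) *
            |(if i ∈ F then (1 / 2 : ℝ) else post D n y i u) - post D n y i u| *
            ∏ j ∈ Finset.univ.filter (i < ·),
              (if j ∈ F then (1 / 2 : ℝ) else post D n y j u) := Finset.sum_comm
    _ = ∑ i ∈ F, ∑ u : Fin (2 ^ n) → ZMod 2,
          (∏ j ∈ Finset.univ.filter (· < i), post D n y j u) *
            |(if i ∈ F then (1 / 2 : ℝ) else post D n y i u) - post D n y i u| *
            ∏ j ∈ Finset.univ.filter (i < ·),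
              (if j ∈ F then (1 / 2 : ℝ) else post D n y j u) := by
        symm
        refine Finset.sum_subset (Finset.subset_univ F) fun i _ hi => ?_
        refine Finset.sum_eq_zero fun u _ => ?_
        rw [if_neg hi, sub_self, abs_zero, mul_zero, zero_mul]
    _ = ∑ i ∈ F, 2 * ∑ w ∈ Finset.univ.filter
            (fun w : Fin (2 ^ n) → ZMod 2 => ∀ j, i ≤ j → w j = 0),
          (∏ j ∈ Finset.univ.filter (· < i), post D n y j w) *
            |1 / 2 - post D n y i w| := Finset.sum_congr rfl hstepi
    _ = 2 * ∑ i ∈ F,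
          ∑ u ∈ Finset.univ.filter
            (fun u : Fin (2 ^ n) → ZMod 2 => ∀ j, i ≤ j → u j = 0),
            (∏ j ∈ Finset.univ.filter (fun j => j < i), post D n y j u) *
              |1 / 2 - post D n y i u| := by rw [Finset.mul_sum]


end
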